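/- arXiv:2107.06324 — 4 statements merged into one kernel-verified Lean document; each statement's English description precedes it below -/
import Mathlib

section
/- Let d ≥ 2 and v ∈ ℝ^{d−1}. Set c := (1 + |v|²)^{−1/2} and let Õ be the unique symmetric positive definite (d−1)×(d−1) matrix with Õ² = (Id_{d−1} + v vᵀ)^{−1}. Then the d×d block matrix O := [[Õ, Õv], [−c vᵀ, c]] (top-left block Õ, top-right column Õv, bottom-left row −c vᵀ, bottom-right entry c) is an orthogonal matrix, and (det Õ)² = 1/(1 + |v|²). -/
open Matrix

noncomputable section

/-- The block matrix `O = [[Õ, Õv], [−c vᵀ, c]]` on `ℝ^{n+1} = ℝ^n × ℝ`. -/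
def blockOrth {n : ℕ} (Ot : Matrix (Fin n) (Fin n) ℝ) (v : Fin n → ℝ) (c : ℝ) :
    Matrix (Fin (n + 1)) (Fin (n + 1)) ℝ :=
  Matrix.of fun i j =>
    if hi : (i : ℕ) < n then
      if hj : (j : ℕ) < n then Ot ⟨i, hi⟩ ⟨j, hj⟩ else (Ot.mulVec v) ⟨i, hi⟩
    else
      if hj : (j : ℕ) < n then -(c * v ⟨j, hj⟩) else c

lemma blockOrth_cc {n : ℕ} (Ot : Matrix (Fin n) (Fin n) ℝ) (v : Fin n → ℝ) (c : ℝ)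
    (i j : Fin n) : blockOrth Ot v c i.castSucc j.castSucc = Ot i j := by
  simp [blockOrth, i.isLt, j.isLt]

lemma blockOrth_cl {n : ℕ} (Ot : Matrix (Fin n) (Fin n) ℝ) (v : Fin n → ℝ) (c : ℝ)
    (i : Fin n) : blockOrth Ot v c i.castSucc (Fin.last n) = Ot.mulVec v i := by
  simp [blockOrth, i.isLt]

lemma blockOrth_lc {n : ℕ} (Ot : Matrix (Fin n) (Fin n) ℝ) (v : Fin n → ℝ) (c : ℝ)
    (j : Fin n) : blockOrth Ot v c (Fin.last n) j.castSucc = -(c * v j) := by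
  simp [blockOrth, j.isLt]

lemma blockOrth_ll {n : ℕ} (Ot : Matrix (Fin n) (Fin n) ℝ) (v : Fin n → ℝ) (c : ℝ) :
    blockOrth Ot v c (Fin.last n) (Fin.last n) = c := by
  simp [blockOrth]

/-- for `v ∈ ℝ^{d−1}`, `c = (1+|v|²)^{−1/2}`, and `Õ` the symmetric positive
definite matrix with `Õ² = (Id + v vᵀ)⁻¹`, the block matrix `O = [[Õ, Õv], [−c vᵀ, c]]`
is orthogonal, and `(det Õ)² = 1/(1+|v|²)`. -/
theorem blockOrth_is_orthogonal
    {n : ℕ} (hn : 1 ≤ n)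
    (v : EuclideanSpace ℝ (Fin n))
    (c : ℝ) (hc : c = (Real.sqrt (1 + ‖v‖ ^ 2))⁻¹)
    (Ot : Matrix (Fin n) (Fin n) ℝ)
    (hOtSymm : Ot.IsSymm) (hOtPD : Ot.PosDef)
    (hOtSq : Ot * Ot = (1 + Matrix.vecMulVec (fun i => v i) (fun i => v i))⁻¹) :
    (blockOrth Ot (fun i => v i) c)ᵀ * blockOrth Ot (fun i => v i) c = 1 ∧
    blockOrth Ot (fun i => v i) c * (blockOrth Ot (fun i => v i) c)ᵀ = 1 ∧
    Ot.det ^ 2 = 1 / (1 + ‖v‖ ^ 2) := by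
  set v' : Fin n → ℝ := fun i => v i with hv'
  set V : Matrix (Fin n) (Fin n) ℝ := Matrix.vecMulVec v' v' with hV
  set s : ℝ := ‖v‖ ^ 2 with hsdef
  have hs0 : 0 ≤ s := sq_nonneg _
  have hs1 : (0:ℝ) < 1 + s := by linarith
  have hsum : ∑ i, v' i * v' i = s := by
    rw [hsdef, EuclideanSpace.norm_eq, Real.sq_sqrt (Finset.sum_nonneg fun i _ => sq_nonneg _)]
    simp [sq]
    rfl
  have hc2 : c ^ 2 * (1 + s) = 1 := by
    rw [hc, ← Real.sqrt_inv, Real.sq_sqrt (by positivity)]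
    field_simp
  -- V * V = s • V
  have hVV : V * V = s • V := by
    ext i j
    simp only [hV, Matrix.mul_apply, Matrix.vecMulVec_apply, Matrix.smul_apply, smul_eq_mul]
    rw [← hsum, Finset.sum_mul]
    exact Finset.sum_congr rfl fun k _ => by ring
  -- (1 + V) * (1 - c^2 • V) = 1
  have h5 : c ^ 2 + c ^ 2 * s = 1 := by nlinarith [hc2]
  have hkey : (1 + V) * (1 - c ^ 2 • V) = 1 := by
    rw [mul_sub, mul_one, Matrix.mul_smul, add_mul, one_mul, hVV]
    rw [smul_add, smul_smul, ← add_smul, h5, one_smul]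
    abel
  have hAinv : (1 + V)⁻¹ = 1 - c ^ 2 • V := inv_eq_right_inv hkey
  have hOt2 : Ot * Ot = 1 - c ^ 2 • V := hOtSq.trans hAinv
  -- determinant
  have hdetA : (1 + V).det = 1 + s := by
    rw [hV, Matrix.vecMulVec_eq (Fin 1), Matrix.det_one_add_replicateCol_mul_replicateRow]
    rw [dotProduct]; exact congrArg _ hsum
  have hdet : Ot.det ^ 2 = 1 / (1 + s) := by
    have h : Ot.det ^ 2 = (Ot * Ot).det := by rw [Matrix.det_mul, sq]
    rw [h, hOtSq, Matrix.det_nonsing_inv, hdetA, Ring.inverse_eq_inv, one_div]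
  -- symmetry facts
  have hsymm : ∀ i j, Ot i j = Ot j i := fun i j => by
    conv_lhs => rw [← hOtSymm]
    rfl
  -- auxiliary identities
  have hVmulVec : V.mulVec v' = s • v' := by
    ext i
    simp only [Matrix.mulVec, dotProduct, hV, Matrix.vecMulVec_apply,
      Pi.smul_apply, smul_eq_mul]
    rw [← hsum, Finset.sum_mul]
    exact Finset.sum_congr rfl fun k _ => by ring
  have hOt2v : (Ot * Ot).mulVec v' = v' - (c ^ 2 * s) • v' := by
    rw [hOt2, Matrix.sub_mulVec, Matrix.one_mulVec, Matrix.smul_mulVec, hVmulVec,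
      smul_smul]
  -- O^T * O = 1
  have hmain : (blockOrth Ot v' c)ᵀ * blockOrth Ot v' c = 1 := by
    ext i j
    rw [Matrix.mul_apply]
    simp only [Matrix.transpose_apply]
    rw [Fin.sum_univ_castSucc]
    induction i using Fin.lastCases with
    | last =>
      induction j using Fin.lastCases with
      | last =>
        simp only [blockOrth_cl, blockOrth_ll]
        have h1 : ∑ k : Fin n, Ot.mulVec v' k * Ot.mulVec v' k
            = Ot.mulVec v' ⬝ᵥ Ot.mulVec v' := rfl
        have h2 : Ot.mulVec v' ᵥ* Ot = (Ot * Ot).mulVec v' := by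
          rw [← Matrix.mulVec_transpose, hOtSymm.eq, Matrix.mulVec_mulVec]
        rw [h1, Matrix.dotProduct_mulVec, h2, hOt2v, sub_dotProduct,
          smul_dotProduct]
        have h4 : v' ⬝ᵥ v' = s := hsum
        rw [h4, Matrix.one_apply_eq]
        simp only [smul_eq_mul]
        linear_combination (1 - s) * hc2
      | cast j =>
        simp only [blockOrth_cc, blockOrth_cl, blockOrth_lc, blockOrth_ll]
        have h1 : ∑ k : Fin n, Ot.mulVec v' k * Ot k j = ((Ot * Ot).mulVec v') j := by
          simp only [Matrix.mulVec, dotProduct, Matrix.mul_apply]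
          simp only [Finset.sum_mul, Finset.mul_sum]
          rw [Finset.sum_comm]
          refine Finset.sum_congr rfl fun k _ => Finset.sum_congr rfl fun l _ => ?_
          rw [hsymm l j]; ring
        rw [h1, hOt2v]
        rw [Matrix.one_apply_ne (by simp [Fin.ext_iff, (Fin.castSucc_lt_last j).ne'])]
        simp only [Pi.sub_apply, Pi.smul_apply, smul_eq_mul]
        linear_combination (-(v' j)) * hc2
    | cast i =>
      induction j using Fin.lastCases with
      | last =>
        simp only [blockOrth_cc, blockOrth_cl, blockOrth_lc, blockOrth_ll]
        have h1 : ∑ k : Fin n, Ot k i * Ot.mulVec v' k = ((Ot * Ot).mulVec v') i := by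
          simp only [Matrix.mulVec, dotProduct, Matrix.mul_apply]
          simp only [Finset.sum_mul, Finset.mul_sum]
          rw [Finset.sum_comm]
          refine Finset.sum_congr rfl fun k _ => Finset.sum_congr rfl fun l _ => ?_
          rw [hsymm l i]; ring
        rw [h1, hOt2v]
        rw [Matrix.one_apply_ne (by simp [Fin.ext_iff, (Fin.castSucc_lt_last i).ne])]
        simp only [Pi.sub_apply, Pi.smul_apply, smul_eq_mul]
        linear_combination (-(v' i)) * hc2
      | cast j =>
        simp only [blockOrth_cc, blockOrth_lc]
        have h1 : ∑ k : Fin n, Ot k i * Ot k j = (Ot * Ot) i j := by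
          rw [Matrix.mul_apply]
          exact Finset.sum_congr rfl fun k _ => by rw [hsymm i k]
        rw [h1, hOt2]
        have h2 : (1 : Matrix (Fin (n+1)) (Fin (n+1)) ℝ) i.castSucc j.castSucc
            = (1 : Matrix (Fin n) (Fin n) ℝ) i j := by
          by_cases h : i = j
          · subst h; rw [Matrix.one_apply_eq, Matrix.one_apply_eq]
          · rw [Matrix.one_apply_ne h,
              Matrix.one_apply_ne fun hh => h (Fin.castSucc_injective n hh)]
        rw [h2]
        simp only [Matrix.sub_apply, Matrix.smul_apply, hV, Matrix.vecMulVec_apply,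
          smul_eq_mul]
        ring
  refine ⟨hmain, ?_, hdet⟩
  rw [mul_eq_one_comm] at hmain
  exact hmain
end
end

section
/- Let d ≥ 2, let θ : [0,∞) → [0,∞) be nondecreasing, and let φ : ℝ^{d−1} → ℝ be C¹ with ‖∇φ‖_∞ ≤ C₀ and |∇φ(x) − ∇φ(y)| ≤ θ(|x − y|) for all x, y. Let x₀ ∈ ℝ^{d−1} with |∇φ(x₀)| ≤ 1, set c := (1+|∇φ(x₀)|²)^{−1/2}, let Õ be the symmetric positive definite matrix with Õ² = (Id_{d−1} + ∇φ(x₀)∇φ(x₀)ᵀ)^{−1}, set b := Õ∇φ(x₀), and define g : ℝ^{d−1} → ℝ^{d−1} by g(x) := Õ(x − x₀) + (φ(x) − φ(x₀)) b. Suppose V ⊆ ℝ^{d−1} is an open convex neighborhood of 0 contained in B_{1/4}(0), and h : V → ℝ^{d−1} is differentiable with g(h(y)) = y for all y ∈ V, h(0) = x₀, and ‖Dh(y)‖ ≤ 2 for all y ∈ V. Define φ̃(y) := −c ∇φ(x₀)·(h(y) − x₀) + c (φ(h(y)) − φ(x₀)) for y ∈ V. Then there is a constant C depending only on d, C₀ and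 θ(1) such that |∇φ̃(y) − ∇φ̃(y′)| ≤ C θ(2|y − y′|) for all y, y′ ∈ V. -/
open Matrix Set Metric

noncomputable section

abbrev Eb (n : ℕ) := EuclideanSpace ℝ (Fin n)

/-- the gradient of `φ : ℝ^n → ℝ` at `y`, as a vector of `ℝ^n` -/
def gradVec {n : ℕ} (φ : Eb n → ℝ) (y : Eb n) : Fin n → ℝ :=
  fun i => fderiv ℝ φ y (EuclideanSpace.single i 1)

/-- The flattening map `g(x) = Õ(x−x₀) + (φ(x)−φ(x₀)) b` with `b = Õ∇φ(x₀)`. -/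
def gFlat {n : ℕ} (Ot : Matrix (Fin n) (Fin n) ℝ) (φ : Eb n → ℝ) (x₀ : Eb n)
    (x : Eb n) : Eb n :=
  (EuclideanSpace.equiv (Fin n) ℝ).symm
    (fun i => Ot.mulVec (fun j => x j - x₀ j) i
      + (φ x - φ x₀) * Ot.mulVec (gradVec φ x₀) i)

/-- The rotated graph function
`φ̃(y) = −c∇φ(x₀)·(h(y)−x₀) + c(φ(h(y))−φ(x₀))`, where `h` is a local inverse of `g`. -/
def phiTilde {n : ℕ} (φ : Eb n → ℝ) (x₀ : Eb n) (c : ℝ) (h : Eb n → Eb n)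
    (y : Eb n) : ℝ :=
  -c * (∑ i, gradVec φ x₀ i * (h y i - x₀ i)) + c * (φ (h y) - φ x₀)

private lemma fderiv_eq_sum_grad {n : ℕ} (φ : Eb n → ℝ) (x₀ : Eb n) (w : Eb n) :
    fderiv ℝ φ x₀ w = ∑ i, gradVec φ x₀ i * w i := by
  have hw := (EuclideanSpace.basisFun (Fin n) ℝ).sum_repr w
  conv_lhs => rw [← hw]
  simp only [EuclideanSpace.basisFun_repr, EuclideanSpace.basisFun_apply]
  rw [map_sum]
  simp only [ContinuousLinearMap.map_smul, smul_eq_mul, gradVec]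
  exact Finset.sum_congr rfl fun i _ => by ring

set_option maxHeartbeats 2000000 in
/-- the rotated graph function `φ̃` obtained by flattening the graph of a
`C¹` function `φ` (with gradient bound `C₀` and modulus of continuity `θ`) at a point
`x₀` with `|∇φ(x₀)| ≤ 1` satisfies `|∇φ̃(y) − ∇φ̃(y′)| ≤ C θ(2|y − y′|)` on the domain `V`
of the local inverse, with `C` depending only on the dimension, `C₀` and `θ(1)`. -/
theorem phiTilde_gradient_modulus
    {n : ℕ} (hn : 1 ≤ n) (C₀ M : ℝ) (hC₀ : 0 ≤ C₀) (hM : 0 ≤ M) :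
    ∃ C : ℝ, 0 < C ∧
      ∀ (θ : ℝ → ℝ), (∀ r : ℝ, 0 ≤ r → 0 ≤ θ r) → MonotoneOn θ (Set.Ici (0:ℝ)) →
        θ 1 ≤ M →
      ∀ (φ : Eb n → ℝ), ContDiff ℝ 1 φ → (∀ x, ‖fderiv ℝ φ x‖ ≤ C₀) →
        (∀ x y : Eb n, ‖fderiv ℝ φ x - fderiv ℝ φ y‖ ≤ θ ‖x - y‖) →
      ∀ (x₀ : Eb n), ‖fderiv ℝ φ x₀‖ ≤ 1 →
      ∀ (Ot : Matrix (Fin n) (Fin n) ℝ), Ot.IsSymm → Ot.PosDef →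
        Ot * Ot = (1 + Matrix.vecMulVec (gradVec φ x₀) (gradVec φ x₀))⁻¹ →
      ∀ (V : Set (Eb n)), IsOpen V → Convex ℝ V → (0 : Eb n) ∈ V →
        V ⊆ ball (0 : Eb n) (1/4) →
      ∀ (h : Eb n → Eb n),
        (∀ y ∈ V, gFlat Ot φ x₀ (h y) = y) →
        h 0 = x₀ →
        (∀ y ∈ V, DifferentiableAt ℝ h y) →
        (∀ y ∈ V, ‖fderiv ℝ h y‖ ≤ 2) →
      ∀ y ∈ V, ∀ y' ∈ V,
        ‖fderiv ℝ (phiTilde φ x₀ (Real.sqrt (1 + ‖fderiv ℝ φ x₀‖ ^ 2))⁻¹ h) y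
          - fderiv ℝ (phiTilde φ x₀ (Real.sqrt (1 + ‖fderiv ℝ φ x₀‖ ^ 2))⁻¹ h) y'‖
          ≤ C * θ (2 * ‖y - y'‖) := by
  refine ⟨2 + 4 * M + 1, by positivity, ?_⟩
  intro θ hθ0 hθmono hθ1 φ hφ hφC₀ hφθ x₀ hx₀ Ot hOtsymm hOtpos hOtsq V hVopen hVconv hV0
    hVball h hgh h0 hhdiff hhnorm y hy y' hy'
  have hφd : ∀ x, DifferentiableAt ℝ φ x := fun x =>
    (hφ.differentiable one_ne_zero).differentiableAt
  set L : Eb n →L[ℝ] ℝ := fderiv ℝ φ x₀ with hL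
  set v : Fin n → ℝ := gradVec φ x₀ with hv
  set c : ℝ := (Real.sqrt (1 + ‖L‖ ^ 2))⁻¹ with hc
  set g : Eb n → Eb n := gFlat Ot φ x₀ with hg
  -- `c` bounds
  have hsq : (1:ℝ) ≤ Real.sqrt (1 + ‖L‖ ^ 2) := by
    nlinarith [Real.sq_sqrt (show (0:ℝ) ≤ 1 + ‖L‖ ^ 2 by positivity),
      Real.sqrt_nonneg (1 + ‖L‖ ^ 2), sq_nonneg ‖L‖]
  have hc0 : 0 ≤ c := by positivity
  have hc1 : c ≤ 1 := by
    rw [hc]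
    exact inv_le_one_of_one_le₀ hsq
  -- the matrix `Ot` as a continuous linear map, and `b = Ot ∇φ(x₀)`
  set Blin : Eb n →L[ℝ] Eb n :=
    LinearMap.toContinuousLinearMap (Matrix.toEuclideanLin Ot) with hBlin
  set bvec : Eb n := (EuclideanSpace.equiv (Fin n) ℝ).symm (Ot.mulVec v) with hbvec
  have hbvec_apply : ∀ i, bvec i = Ot.mulVec v i := fun i => rfl
  have hBlin_apply : ∀ (x : Eb n) (i : Fin n), Blin x i = Ot.mulVec (fun j => x j) i :=
    fun x i => rfl
  -- derivative of the flattening map `g`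
  have hgderiv : ∀ x : Eb n,
      HasFDerivAt g (Blin + (fderiv ℝ φ x).smulRight bvec) x := by
    intro x
    have he : g = fun z => (Blin z - Blin x₀) + (φ z - φ x₀) • bvec := by
      funext z
      ext i
      show Ot.mulVec (fun j => z j - x₀ j) i + (φ z - φ x₀) * Ot.mulVec v i
        = (Blin z - Blin x₀) i + ((φ z - φ x₀) • bvec) i
      have h1 : (fun j => z j - x₀ j) = (fun j => z j) - fun j => x₀ j := rfl
      rw [h1, Matrix.mulVec_sub]
      simp only [Pi.sub_apply, PiLp.sub_apply, PiLp.smul_apply, smul_eq_mul,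
        hBlin_apply, hbvec_apply]
    rw [he]
    exact ((Blin.hasFDerivAt.sub_const (Blin x₀))).add
      (((hφd x).hasFDerivAt.sub_const (φ x₀)).smul_const bvec)
  have hDg : ∀ x, fderiv ℝ g x = Blin + (fderiv ℝ φ x).smulRight bvec :=
    fun x => (hgderiv x).fderiv
  -- `Dg(h z) ∘ Dh z = id` on `V`
  have hright : ∀ z ∈ V,
      (fderiv ℝ g (h z)).comp (fderiv ℝ h z) = ContinuousLinearMap.id ℝ (Eb n) := by
    intro z hz
    have hev : (g ∘ h) =ᶠ[nhds z] id := by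
      filter_upwards [hVopen.mem_nhds hz] with w hw using hgh w hw
    have h1 : fderiv ℝ (g ∘ h) z = fderiv ℝ (id : Eb n → Eb n) z := hev.fderiv_eq
    rw [fderiv_id] at h1
    rw [← h1]
    exact (fderiv_comp z (hgderiv (h z)).differentiableAt (hhdiff z hz)).symm
  -- `Dh z ∘ Dg(h z) = id` on `V` (finite dimension)
  have hleft : ∀ z ∈ V,
      (fderiv ℝ h z).comp (fderiv ℝ g (h z)) = ContinuousLinearMap.id ℝ (Eb n) := by
    intro z hz
    have h1 : ((fderiv ℝ g (h z)) : Eb n →ₗ[ℝ] Eb n)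
        * ((fderiv ℝ h z) : Eb n →ₗ[ℝ] Eb n) = 1 :=
      LinearMap.ext fun w => by simpa using DFunLike.congr_fun (hright z hz) w
    have h2 := mul_eq_one_comm.mp h1
    refine ContinuousLinearMap.ext fun w => ?_
    simpa using DFunLike.congr_fun h2 w
  -- difference formula for `Dh`
  have hDhdiff : ∀ z ∈ V, ∀ z' ∈ V,
      fderiv ℝ h z - fderiv ℝ h z'
        = (fderiv ℝ h z).comp ((fderiv ℝ g (h z') - fderiv ℝ g (h z)).comp
            (fderiv ℝ h z')) := by
    intro z hz z' hz'
    refine ContinuousLinearMap.ext fun w => ?_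
    have e1 := DFunLike.congr_fun (hright z' hz') w
    have e2 := DFunLike.congr_fun (hleft z hz) ((fderiv ℝ h z') w)
    simp only [ContinuousLinearMap.comp_apply, ContinuousLinearMap.id_apply] at e1 e2
    simp only [ContinuousLinearMap.sub_apply, ContinuousLinearMap.comp_apply, map_sub, e1, e2]
  -- difference of `Dg`s is a rank-one map
  have hDgdiff : ∀ a b : Eb n,
      fderiv ℝ g a - fderiv ℝ g b = (fderiv ℝ φ a - fderiv ℝ φ b).smulRight bvec := by
    intro a b
    rw [hDg, hDg]
    refine ContinuousLinearMap.ext fun w => ?_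
    simp only [ContinuousLinearMap.sub_apply, ContinuousLinearMap.add_apply,
      ContinuousLinearMap.smulRight_apply, sub_smul]
    abel
  -- ‖bvec‖ ≤ 1
  have hbnorm : ‖bvec‖ ≤ 1 := by
    set A : Matrix (Fin n) (Fin n) ℝ := 1 + Matrix.vecMulVec v v with hA
    have hdetOt : 0 < Ot.det := hOtpos.det_pos
    haveI : Nonempty (Fin n) := ⟨⟨0, hn⟩⟩
    have hdetA : IsUnit A.det := by
      by_contra hcon
      have hinv0 : A⁻¹ = 0 := Matrix.nonsing_inv_apply_not_isUnit A hcon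
      rw [← hOtsq] at hinv0
      have h2 := congrArg Matrix.det hinv0
      rw [Matrix.det_mul, Matrix.det_zero] at h2
      nlinarith
    have hmul : A * A⁻¹ = 1 := Matrix.mul_nonsing_inv A hdetA
    set w : Fin n → ℝ := A⁻¹.mulVec v with hw
    have hvw : A.mulVec w = v := by
      rw [hw, Matrix.mulVec_mulVec, hmul, Matrix.one_mulVec]
    set t : ℝ := v ⬝ᵥ w with ht
    have hww : 0 ≤ w ⬝ᵥ w := Finset.sum_nonneg fun i _ => mul_self_nonneg _
    have hrank1 : (Matrix.vecMulVec v v).mulVec w = (v ⬝ᵥ w) • v := by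
      funext i
      simp only [Matrix.mulVec, Matrix.vecMulVec_apply, dotProduct,
        Pi.smul_apply, smul_eq_mul, Finset.sum_mul]
      exact Finset.sum_congr rfl fun j _ => by ring
    have htw : t = w ⬝ᵥ w + t * t := by
      have e2 : (A.mulVec w) ⬝ᵥ w = w ⬝ᵥ w + t * t := by
        rw [hA, Matrix.add_mulVec, Matrix.one_mulVec, hrank1,
          add_dotProduct, smul_dotProduct, smul_eq_mul, ← ht]
      conv_lhs => rw [ht, ← hvw]
      exact e2
    have ht1 : t ≤ 1 := by nlinarith
    have hsum : (∑ i, bvec i ^ 2) = t := by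
      have h1 : (∑ i, bvec i ^ 2) = (Ot.mulVec v) ⬝ᵥ (Ot.mulVec v) := by
        simp only [dotProduct, hbvec_apply, sq]
      rw [h1]
      have h2 : (Ot.mulVec v) ⬝ᵥ (Ot.mulVec v) = ((Ot * Ot).mulVec v) ⬝ᵥ v := by
        rw [Matrix.dotProduct_mulVec, ← Matrix.mulVec_transpose, hOtsymm.eq,
          Matrix.mulVec_mulVec]
      rw [h2, hOtsq, ← hw, dotProduct_comm, ← ht]
    have hnormeq : ‖bvec‖ = Real.sqrt (∑ i, bvec i ^ 2) := by
      rw [EuclideanSpace.norm_eq]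
      congr 1
      exact Finset.sum_congr rfl fun i _ => by rw [Real.norm_eq_abs, sq_abs]
    rw [hnormeq, hsum]
    calc Real.sqrt t ≤ Real.sqrt 1 := Real.sqrt_le_sqrt ht1
    _ = 1 := Real.sqrt_one
  -- h is 2-Lipschitz on V
  have hlip : ∀ a ∈ V, ∀ b ∈ V, ‖h a - h b‖ ≤ 2 * ‖a - b‖ := fun a ha b hb =>
    hVconv.norm_image_sub_le_of_norm_fderiv_le hhdiff hhnorm hb ha
  have hθyy' : ∀ a ∈ V, ∀ b ∈ V,
      ‖fderiv ℝ φ (h a) - fderiv ℝ φ (h b)‖ ≤ θ (2 * ‖a - b‖) := by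
    intro a ha b hb
    refine (hφθ (h a) (h b)).trans (hθmono (mem_Ici.mpr (norm_nonneg _))
      (mem_Ici.mpr (by positivity)) ?_)
    exact hlip a ha b hb
  set K : ℝ := θ (2 * ‖y - y'‖) with hK
  have hK0 : 0 ≤ K := hθ0 _ (by positivity)
  -- ‖Dφ(h y') - Dφ(x₀)‖ ≤ M
  have hM' : ‖fderiv ℝ φ (h y') - L‖ ≤ M := by
    have h1 : ‖h y' - x₀‖ ≤ 1 := by
      have h2 := hlip y' hy' 0 hV0
      rw [h0] at h2
      have hy'n : ‖y'‖ < 1/4 := by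
        have := hVball hy'
        simpa [dist_eq_norm] using this
      rw [sub_zero] at h2
      linarith
    calc ‖fderiv ℝ φ (h y') - L‖ ≤ θ ‖h y' - x₀‖ := hφθ _ _
    _ ≤ θ 1 := hθmono (mem_Ici.mpr (norm_nonneg _)) (mem_Ici.mpr zero_le_one) h1
    _ ≤ M := hθ1
  -- derivative of phiTilde
  have hTder : ∀ z ∈ V, fderiv ℝ (phiTilde φ x₀ c h) z
      = c • ((fderiv ℝ φ (h z) - L).comp (fderiv ℝ h z)) := by
    intro z hz
    have hrepr : phiTilde φ x₀ c h = fun w => -c * (L (h w) - L x₀) + c * (φ (h w) - φ x₀) := by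
      funext w
      simp only [phiTilde]
      have hsum : (∑ i, gradVec φ x₀ i * (h w i - x₀ i)) = L (h w) - L x₀ := by
        rw [hL, fderiv_eq_sum_grad φ x₀ (h w), fderiv_eq_sum_grad φ x₀ x₀,
          ← Finset.sum_sub_distrib]
        exact Finset.sum_congr rfl fun i _ => by ring
      rw [hsum]
    have hd1 : HasFDerivAt (fun w => L (h w)) (L.comp (fderiv ℝ h z)) z :=
      L.hasFDerivAt.comp z (hhdiff z hz).hasFDerivAt
    have hd2 : HasFDerivAt (fun w => φ (h w)) ((fderiv ℝ φ (h z)).comp (fderiv ℝ h z)) z :=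
      (hφd (h z)).hasFDerivAt.comp z (hhdiff z hz).hasFDerivAt
    have hd : HasFDerivAt (phiTilde φ x₀ c h)
        ((-c) • (L.comp (fderiv ℝ h z)) + c • ((fderiv ℝ φ (h z)).comp (fderiv ℝ h z))) z := by
      rw [hrepr]
      exact ((hd1.sub_const (L x₀)).const_mul (-c)).add ((hd2.sub_const (φ x₀)).const_mul c)
    rw [hd.fderiv]
    ext w
    simp only [ContinuousLinearMap.add_apply, ContinuousLinearMap.smul_apply,
      ContinuousLinearMap.comp_apply, ContinuousLinearMap.sub_apply, smul_eq_mul]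
    ring
  -- the difference identity
  have hid : fderiv ℝ (phiTilde φ x₀ c h) y - fderiv ℝ (phiTilde φ x₀ c h) y'
      = c • (((fderiv ℝ φ (h y) - fderiv ℝ φ (h y')).comp (fderiv ℝ h y))
           + ((fderiv ℝ φ (h y') - L).comp (fderiv ℝ h y - fderiv ℝ h y'))) := by
    rw [hTder y hy, hTder y' hy']
    ext w
    simp only [ContinuousLinearMap.sub_apply, ContinuousLinearMap.smul_apply,
      ContinuousLinearMap.add_apply, ContinuousLinearMap.comp_apply, map_sub, smul_eq_mul]
    ring
  -- norm bounds
  have hDh : ‖fderiv ℝ h y - fderiv ℝ h y'‖ ≤ 4 * K := by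
    rw [hDhdiff y hy y' hy']
    have hg1 : ‖fderiv ℝ g (h y') - fderiv ℝ g (h y)‖ ≤ K := by
      rw [hDgdiff]
      rw [ContinuousLinearMap.norm_smulRight_apply]
      have := hθyy' y' hy' y hy
      rw [norm_sub_rev y'] at this
      calc ‖fderiv ℝ φ (h y') - fderiv ℝ φ (h y)‖ * ‖bvec‖
          ≤ K * 1 := mul_le_mul this hbnorm (norm_nonneg _) hK0
      _ = K := mul_one _
    calc ‖(fderiv ℝ h y).comp ((fderiv ℝ g (h y') - fderiv ℝ g (h y)).comp (fderiv ℝ h y'))‖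
        ≤ ‖fderiv ℝ h y‖ * ‖(fderiv ℝ g (h y') - fderiv ℝ g (h y)).comp (fderiv ℝ h y')‖ :=
          ContinuousLinearMap.opNorm_comp_le _ _
    _ ≤ 2 * (K * 2) := by
        refine mul_le_mul (hhnorm y hy) ?_ (norm_nonneg _) (by norm_num)
        calc ‖(fderiv ℝ g (h y') - fderiv ℝ g (h y)).comp (fderiv ℝ h y')‖
            ≤ ‖fderiv ℝ g (h y') - fderiv ℝ g (h y)‖ * ‖fderiv ℝ h y'‖ :=
              ContinuousLinearMap.opNorm_comp_le _ _
        _ ≤ K * 2 := mul_le_mul hg1 (hhnorm y' hy') (norm_nonneg _) hK0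
    _ = 4 * K := by ring
  have hn1 : ‖(fderiv ℝ φ (h y) - fderiv ℝ φ (h y')).comp (fderiv ℝ h y)‖ ≤ K * 2 :=
    (ContinuousLinearMap.opNorm_comp_le _ _).trans
      (mul_le_mul (hθyy' y hy y' hy') (hhnorm y hy) (norm_nonneg _) hK0)
  have hn2 : ‖(fderiv ℝ φ (h y') - L).comp (fderiv ℝ h y - fderiv ℝ h y')‖ ≤ M * (4 * K) :=
    (ContinuousLinearMap.opNorm_comp_le _ _).trans
      (mul_le_mul hM' hDh (norm_nonneg _) hM)
  rw [hid]
  rw [norm_smul]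
  calc ‖c‖ * ‖((fderiv ℝ φ (h y) - fderiv ℝ φ (h y')).comp (fderiv ℝ h y))
        + ((fderiv ℝ φ (h y') - L).comp (fderiv ℝ h y - fderiv ℝ h y'))‖
      ≤ 1 * (K * 2 + M * (4 * K)) := by
        refine mul_le_mul ?_ ((norm_add_le _ _).trans (add_le_add hn1 hn2)) (norm_nonneg _)
          zero_le_one
        rw [Real.norm_eq_abs, abs_of_nonneg hc0]
        exact hc1
  _ ≤ (2 + 4 * M + 1) * K := by nlinarith
end
end

section
/- Let θ : (0,∞) → [0,∞) be nondecreasing and locally integrable against ds/s, and define θ̂(r) := (1/log²2) ∫_r^{2r} (1/t) ( ∫_t^{2t} θ(s)/s ds ) dt. Then θ̂ is differentiable on (0,∞) with ρ θ̂′(ρ) = (1/log²2) ∫_ρ^{2ρ} (θ(2s) − θ(s))/s ds, and for every ρ > 0 one has 3θ̂(ρ) + 3ρ θ̂′(ρ) ≤ 13 θ(4ρ). Consequently, if r₀ > 0 satisfies θ(4r₀) < 1/26, then the function f(ρ) := −ρ + 3ρ θ̂(ρ) is strictly decreasing on (0, r₀], with f′(ρ) ≤ −1 + 13θ(4r₀)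 < −1/2. -/
open MeasureTheory Set Filter intervalIntegral

open Topology

noncomputable section

/-- The smoothed Dini parameter `θ̂(r) = (1/log² 2) ∫_r^{2r} (1/t) ∫_t^{2t} θ(s)/s ds dt`. -/
def smoothedTheta (θ : ℝ → ℝ) (r : ℝ) : ℝ :=
  (1 / (Real.log 2) ^ 2) * ∫ t in r..(2 * r), (1 / t) * ∫ s in t..(2 * t), θ s / s

section Aux

variable {θ : ℝ → ℝ}

lemma primitive_continuousAt
    (hθint : ∀ a b : ℝ, 0 < a → IntervalIntegrable (fun s => θ s / s) volume a b)
    {a x : ℝ} (ha : 0 < a) (hx : 0 < x) :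
    ContinuousAt (fun y => ∫ s in a..y, θ s / s) x := by
  have huIcc : Set.uIcc (x/2) (2*x) = Set.Icc (x/2) (2*x) :=
    Set.uIcc_of_le (by linarith)
  have hmem : Set.uIcc (x/2) (2*x) ∈ 𝓝 x := by
    rw [huIcc]; exact Icc_mem_nhds (by linarith) (by linarith)
  have hcont : ContinuousOn
      (fun y => (∫ s in a..(x/2), θ s / s) + ∫ s in (x/2)..y, θ s / s)
      (Set.uIcc (x/2) (2*x)) :=
    continuousOn_const.add
      (intervalIntegral.continuousOn_primitive_interval'
        (hθint (x/2) (2*x) (by linarith)) left_mem_uIcc)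
  have heq : (fun y => ∫ s in a..y, θ s / s) =ᶠ[𝓝 x]
      (fun y => (∫ s in a..(x/2), θ s / s) + ∫ s in (x/2)..y, θ s / s) := by
    filter_upwards [hmem] with y hy
    rw [huIcc] at hy
    exact (intervalIntegral.integral_add_adjacent_intervals
      (hθint a (x/2) ha) (hθint (x/2) y (by linarith))).symm
  exact ((hcont.continuousAt hmem).congr heq.symm)

/-- Continuity of `t ↦ (1/t) ∫_t^{2t} θ(s)/s ds` at positive points. -/
lemma hfun_continuousAt
    (hθint : ∀ a b : ℝ, 0 < a → IntervalIntegrable (fun s => θ s / s) volume a b)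
    {t : ℝ} (ht : 0 < t) :
    ContinuousAt (fun t => (1 / t) * ∫ s in t..(2 * t), θ s / s) t := by
  have h1 : ContinuousAt (fun u => ∫ s in (1:ℝ)..u, θ s / s) t :=
    primitive_continuousAt hθint one_pos ht
  have h2 : ContinuousAt (fun u : ℝ => ∫ s in (1:ℝ)..(2*u), θ s / s) t := by
    have := (primitive_continuousAt hθint one_pos (by linarith : (0:ℝ) < 2*t)).comp
      ((continuous_const.mul continuous_id).continuousAt (x := t))
    exact this
  have hinv : ContinuousAt (fun u : ℝ => 1 / u) t :=
    ContinuousAt.div continuousAt_const continuousAt_id (ne_of_gt ht)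
  have hmain : ContinuousAt
      (fun u : ℝ => (1 / u) * ((∫ s in (1:ℝ)..(2*u), θ s / s) - ∫ s in (1:ℝ)..u, θ s / s)) t :=
    hinv.mul (h2.sub h1)
  apply hmain.congr
  filter_upwards [Ioi_mem_nhds ht] with u hu
  have hu' : (0:ℝ) < u := hu
  rw [intervalIntegral.integral_interval_sub_left (hθint 1 (2*u) one_pos) (hθint 1 u one_pos)]

lemma hfun_intervalIntegrable
    (hθint : ∀ a b : ℝ, 0 < a → IntervalIntegrable (fun s => θ s / s) volume a b)
    {a b : ℝ} (ha : 0 < a) (hb : 0 < b) :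
    IntervalIntegrable (fun t => (1 / t) * ∫ s in t..(2 * t), θ s / s) volume a b := by
  have hcontOn : ContinuousOn (fun t => (1 / t) * ∫ s in t..(2 * t), θ s / s)
      (Set.Ioi (0:ℝ)) := fun t ht => (hfun_continuousAt hθint ht).continuousWithinAt
  refine (hcontOn.mono ?_).intervalIntegrable
  intro x hx
  rcases Set.mem_uIcc.mp hx with ⟨h1, _⟩ | ⟨h1, _⟩ <;> [exact lt_of_lt_of_le ha h1;
    exact lt_of_lt_of_le hb h1]

lemma comp2_intervalIntegrable
    (hθint : ∀ a b : ℝ, 0 < a → IntervalIntegrable (fun s => θ s / s) volume a b)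
    {ρ : ℝ} (hρ : 0 < ρ) :
    IntervalIntegrable (fun s => θ (2*s) / s) volume ρ (2*ρ) := by
  have h0 := (hθint (2*ρ) (4*ρ) (by linarith)).comp_mul_left (c := 2)
  rw [show (2*ρ)/2 = ρ by ring, show (4*ρ)/2 = 2*ρ by ring] at h0
  have h1 := h0.const_mul 2
  apply h1.congr_ae
  filter_upwards [ae_restrict_mem measurableSet_uIoc] with s hs
  rw [Set.uIoc_of_le (by linarith)] at hs
  have hs0 : (0:ℝ) < s := lt_trans hρ hs.1
  field_simp
  try ring

lemma diff_intervalIntegrable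
    (hθint : ∀ a b : ℝ, 0 < a → IntervalIntegrable (fun s => θ s / s) volume a b)
    {ρ : ℝ} (hρ : 0 < ρ) :
    IntervalIntegrable (fun s => (θ (2*s) - θ s) / s) volume ρ (2*ρ) := by
  have h1 := (comp2_intervalIntegrable hθint hρ).sub (hθint ρ (2*ρ) hρ)
  apply h1.congr_ae
  filter_upwards [ae_restrict_mem measurableSet_uIoc] with s hs
  rw [Set.uIoc_of_le (by linarith)] at hs
  have hs0 : (0:ℝ) < s := lt_trans hρ hs.1
  exact (sub_div _ _ _).symm

/-- Main derivative computation. -/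
lemma smoothedTheta_hasDerivAt
    (hθint : ∀ a b : ℝ, 0 < a → IntervalIntegrable (fun s => θ s / s) volume a b)
    {ρ : ℝ} (hρ : 0 < ρ) :
    HasDerivAt (smoothedTheta θ)
      (((1 / (Real.log 2) ^ 2) * ∫ s in ρ..(2 * ρ), (θ (2 * s) - θ s) / s) / ρ) ρ := by
  set c : ℝ := 1 / (Real.log 2) ^ 2 with hc
  set h : ℝ → ℝ := fun t => (1 / t) * ∫ s in t..(2 * t), θ s / s with hh
  have hcontOn : ContinuousOn h (Set.Ioi (0:ℝ)) := fun t ht =>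
    (hfun_continuousAt hθint ht).continuousWithinAt
  have hint_h : ∀ a b : ℝ, 0 < a → 0 < b → IntervalIntegrable h volume a b := fun a b ha hb =>
    hfun_intervalIntegrable hθint ha hb
  set H : ℝ → ℝ := fun x => ∫ t in ρ..x, h t with hH
  have hHd : ∀ x : ℝ, 0 < x → HasDerivAt H (h x) x := fun x hx =>
    intervalIntegral.integral_hasDerivAt_right (hint_h ρ x hρ hx)
      (hcontOn.stronglyMeasurableAtFilter isOpen_Ioi x hx)
      (hfun_continuousAt hθint hx)
  have hF : HasDerivAt (fun r => H (2 * r) - H r) (h (2 * ρ) * 2 - h ρ * 1) ρ := by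
    have h2 : HasDerivAt (fun r : ℝ => H (2 * r)) (h (2 * ρ) * 2) ρ := by
      have := (hHd (2 * ρ) (by linarith)).comp ρ
        ((hasDerivAt_id ρ).const_mul 2)
      rw [mul_one] at this
      exact this
    exact h2.sub (by simpa using (hHd ρ hρ))
  have heq : smoothedTheta θ =ᶠ[𝓝 ρ] fun r => c * (H (2 * r) - H r) := by
    filter_upwards [Ioi_mem_nhds hρ] with r hr
    have hr' : (0:ℝ) < r := hr
    unfold smoothedTheta
    rw [intervalIntegral.integral_interval_sub_left (hint_h ρ (2*r) hρ (by linarith))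
      (hint_h ρ r hρ hr')]
  have hD : HasDerivAt (smoothedTheta θ) (c * (h (2 * ρ) * 2 - h ρ * 1)) ρ :=
    (hF.const_mul c).congr_of_eventuallyEq heq
  convert hD using 1
  have hsub : ∫ s in ρ..(2*ρ), θ (2*s) / s = ∫ s in (2*ρ)..(2*(2*ρ)), θ s / s := by
    have e1 : ∫ s in ρ..(2*ρ), θ (2*s) / s
        = ∫ s in ρ..(2*ρ), 2 * ((fun u => θ u / u) (2*s)) := by
      apply intervalIntegral.integral_congr
      intro s hs
      rw [Set.uIcc_of_le (by linarith)] at hs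
      have hs0 : (0:ℝ) < s := lt_of_lt_of_le hρ hs.1
      field_simp
      try ring
    rw [e1, intervalIntegral.integral_const_mul,
      intervalIntegral.integral_comp_mul_left (fun u => θ u / u) (two_ne_zero)]
    simp [smul_eq_mul]
    try ring
  have hdiff : ∫ s in ρ..(2*ρ), (θ (2*s) - θ s) / s
      = (∫ s in ρ..(2*ρ), θ (2*s) / s) - ∫ s in ρ..(2*ρ), θ s / s := by
    rw [← intervalIntegral.integral_sub (comp2_intervalIntegrable hθint hρ) (hθint ρ (2*ρ) hρ)]
    apply intervalIntegral.integral_congr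
    intro s hs
    rw [Set.uIcc_of_le (by linarith)] at hs
    have hs0 : (0:ℝ) < s := lt_of_lt_of_le hρ hs.1
    exact sub_div _ _ _
  rw [hdiff, hsub]
  have hH2 : h (2*ρ) = (1/(2*ρ)) * ∫ s in (2*ρ)..(2*(2*ρ)), θ s / s := rfl
  have hH1 : h ρ = (1/ρ) * ∫ s in ρ..(2*ρ), θ s / s := rfl
  rw [hH2, hH1]
  field_simp

/-- The key bound `3θ̂(ρ) + 3ρθ̂′(ρ) ≤ 13 θ(4ρ)`. -/
lemma smoothedTheta_bound
    (hθnn : ∀ s : ℝ, 0 < s → 0 ≤ θ s)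
    (hθmono : MonotoneOn θ (Set.Ioi (0:ℝ)))
    (hθint : ∀ a b : ℝ, 0 < a → IntervalIntegrable (fun s => θ s / s) volume a b)
    {ρ : ℝ} (hρ : 0 < ρ) :
    3 * smoothedTheta θ ρ
      + 3 * ρ * (((1 / (Real.log 2) ^ 2) * ∫ s in ρ..(2 * ρ), (θ (2 * s) - θ s) / s) / ρ)
      ≤ 13 * θ (4 * ρ) := by
  set L : ℝ := Real.log 2 with hLdef
  have hL : 0 < L := Real.log_pos one_lt_two
  have hL2 : (0.6931471803 : ℝ) < L := Real.log_two_gt_d9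
  have hθ4 : 0 ≤ θ (4*ρ) := hθnn _ (by linarith)
  set c : ℝ := 1 / L ^ 2 with hc
  have hcpos : 0 < c := by positivity
  -- integrability of x ↦ θ(4ρ)*(1/x) on positive intervals
  have hconst_int : ∀ a b : ℝ, 0 < a → 0 < b →
      IntervalIntegrable (fun s : ℝ => θ (4*ρ) * (1/s)) volume a b := by
    intro a b ha hb
    apply ContinuousOn.intervalIntegrable
    apply continuousOn_const.mul
    apply ContinuousOn.div continuousOn_const continuousOn_id
    intro x hx
    rcases Set.mem_uIcc.mp hx with ⟨h1, _⟩ | ⟨h1, _⟩ <;>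
      [exact ne_of_gt (lt_of_lt_of_le ha h1); exact ne_of_gt (lt_of_lt_of_le hb h1)]
  have hone_div : ∀ a : ℝ, 0 < a →
      (∫ s in a..(2*a), θ (4*ρ) * (1/s)) = θ (4*ρ) * L := by
    intro a ha
    rw [intervalIntegral.integral_const_mul, integral_one_div, show (2*a)/a = 2 by field_simp]
    rw [Set.uIcc_of_le (by linarith)]
    intro hmem
    exact absurd hmem.1 (by linarith)
  -- inner bound
  have inner : ∀ t : ℝ, ρ ≤ t → t ≤ 2*ρ →
      (∫ s in t..(2*t), θ s / s) ≤ θ (4*ρ) * L := by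
    intro t h1 h2
    have ht : 0 < t := lt_of_lt_of_le hρ h1
    have hmono := intervalIntegral.integral_mono_on (by linarith : t ≤ 2*t)
      (hθint t (2*t) ht) (hconst_int t (2*t) ht (by linarith)) ?_
    · rw [hone_div t ht] at hmono; exact hmono
    · intro s hs
      have hs0 : 0 < s := lt_of_lt_of_le ht hs.1
      have hθle : θ s ≤ θ (4*ρ) :=
        hθmono (Set.mem_Ioi.mpr hs0) (Set.mem_Ioi.mpr (by linarith)) (by linarith [hs.2])
      rw [mul_one_div]
      exact (div_le_div_iff_of_pos_right hs0).mpr hθle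
  -- outer bound : smoothedTheta θ ρ ≤ θ (4ρ)
  have houter : smoothedTheta θ ρ ≤ θ (4*ρ) := by
    have hrhs_int : IntervalIntegrable (fun t : ℝ => (1/t) * (θ (4*ρ) * L)) volume ρ (2*ρ) := by
      apply ContinuousOn.intervalIntegrable
      apply ContinuousOn.mul ?_ continuousOn_const
      apply ContinuousOn.div continuousOn_const continuousOn_id
      intro x hx
      rw [Set.uIcc_of_le (by linarith)] at hx
      exact ne_of_gt (lt_of_lt_of_le hρ hx.1)
    have hmono := intervalIntegral.integral_mono_on (by linarith : ρ ≤ 2*ρ)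
      (hfun_intervalIntegrable hθint hρ (by linarith)) hrhs_int ?_
    · have hrhs : (∫ t in ρ..(2*ρ), (1/t) * (θ (4*ρ) * L)) = θ (4*ρ) * L * L := by
        have : (fun t : ℝ => (1/t) * (θ (4*ρ) * L)) = fun t : ℝ => (θ (4*ρ) * L) * (1/t) := by
          funext t; ring
        rw [this, intervalIntegral.integral_const_mul, integral_one_div, show (2*ρ)/ρ = 2 by field_simp]
        rw [Set.uIcc_of_le (by linarith)]
        intro hmem
        exact absurd hmem.1 (by linarith)
      rw [hrhs] at hmono
      unfold smoothedTheta
      calc (1 / L ^ 2) * ∫ t in ρ..(2*ρ), (1/t) * ∫ s in t..(2*t), θ s / s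
          ≤ (1 / L ^ 2) * (θ (4*ρ) * L * L) := by
            apply mul_le_mul_of_nonneg_left hmono (le_of_lt hcpos)
        _ = θ (4*ρ) := by field_simp
    · intro t ht
      have ht0 : 0 < t := lt_of_lt_of_le hρ ht.1
      exact mul_le_mul_of_nonneg_left (inner t ht.1 ht.2) (by positivity)
  -- bound on the derivative integral
  have hI : (∫ s in ρ..(2*ρ), (θ (2*s) - θ s) / s) ≤ θ (4*ρ) * L := by
    have hmono := intervalIntegral.integral_mono_on (by linarith : ρ ≤ 2*ρ)
      (diff_intervalIntegrable hθint hρ) (hconst_int ρ (2*ρ) hρ (by linarith)) ?_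
    · rw [hone_div ρ hρ] at hmono; exact hmono
    · intro s hs
      have hs0 : 0 < s := lt_of_lt_of_le hρ hs.1
      have h2s : θ (2*s) ≤ θ (4*ρ) :=
        hθmono (Set.mem_Ioi.mpr (by linarith)) (Set.mem_Ioi.mpr (by linarith))
          (by linarith [hs.2])
      have hsnn : 0 ≤ θ s := hθnn s hs0
      rw [mul_one_div]
      exact (div_le_div_iff_of_pos_right hs0).mpr (by linarith)
  -- combine
  have hcancel : 3 * ρ * ((c * ∫ s in ρ..(2*ρ), (θ (2*s) - θ s) / s) / ρ)
      = 3 * (c * ∫ s in ρ..(2*ρ), (θ (2*s) - θ s) / s) := by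
    field_simp
  have hgoal : 3 * smoothedTheta θ ρ
      + 3 * ρ * ((c * ∫ s in ρ..(2*ρ), (θ (2*s) - θ s) / s) / ρ) ≤ 13 * θ (4*ρ) := by
    rw [hcancel]
    have hCI : c * (∫ s in ρ..(2*ρ), (θ (2*s) - θ s) / s) ≤ θ (4*ρ) / L := by
      calc c * (∫ s in ρ..(2*ρ), (θ (2*s) - θ s) / s)
          ≤ c * (θ (4*ρ) * L) := mul_le_mul_of_nonneg_left hI (le_of_lt hcpos)
        _ = θ (4*ρ) / L := by rw [hc]; field_simp
    set q : ℝ := θ (4*ρ) / L with hq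
    have hqL : q * L = θ (4*ρ) := by rw [hq]; field_simp
    have hqnn : 0 ≤ q := by positivity
    nlinarith [houter, hCI, hθ4, hqnn, hqL, hL2]
  exact hgoal

end Aux

/-- `θ̂` is differentiable on `(0,∞)` with
`ρ θ̂′(ρ) = (1/log²2) ∫_ρ^{2ρ} (θ(2s) − θ(s))/s ds`, one has
`3θ̂(ρ) + 3ρθ̂′(ρ) ≤ 13 θ(4ρ)`, and if `θ(4r₀) < 1/26` then
`f(ρ) = −ρ + 3ρθ̂(ρ)` is strictly decreasing on `(0,r₀]`, with derivative
`f′(ρ) ≤ −1 + 13θ(4r₀) < −1/2` there. -/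
theorem smoothedTheta_deriv_and_strictAnti
    (θ : ℝ → ℝ)
    (hθnn : ∀ s : ℝ, 0 < s → 0 ≤ θ s)
    (hθmono : MonotoneOn θ (Set.Ioi (0:ℝ)))
    (hθint : ∀ a b : ℝ, 0 < a → IntervalIntegrable (fun s => θ s / s) volume a b) :
    (∀ ρ : ℝ, 0 < ρ →
      HasDerivAt (smoothedTheta θ)
        (((1 / (Real.log 2) ^ 2) * ∫ s in ρ..(2 * ρ), (θ (2 * s) - θ s) / s) / ρ) ρ) ∧
    (∀ ρ : ℝ, 0 < ρ →
      3 * smoothedTheta θ ρ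
        + 3 * ρ * (((1 / (Real.log 2) ^ 2) * ∫ s in ρ..(2 * ρ), (θ (2 * s) - θ s) / s) / ρ)
        ≤ 13 * θ (4 * ρ)) ∧
    (∀ r₀ : ℝ, 0 < r₀ → θ (4 * r₀) < 1 / 26 →
      StrictAntiOn (fun ρ => -ρ + 3 * ρ * smoothedTheta θ ρ) (Set.Ioc 0 r₀) ∧
      (-1 + 13 * θ (4 * r₀) < -(1 / 2)) ∧
      ∀ ρ ∈ Set.Ioc (0:ℝ) r₀, ∃ y : ℝ,
        HasDerivAt (fun ρ' => -ρ' + 3 * ρ' * smoothedTheta θ ρ') y ρ ∧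
        y ≤ -1 + 13 * θ (4 * r₀)) := by
  refine ⟨fun ρ hρ => smoothedTheta_hasDerivAt hθint hρ,
    fun ρ hρ => smoothedTheta_bound hθnn hθmono hθint hρ, ?_⟩
  intro r₀ hr₀ hsmall
  have hf : ∀ ρ ∈ Set.Ioc (0:ℝ) r₀, ∃ y : ℝ,
      HasDerivAt (fun ρ' => -ρ' + 3 * ρ' * smoothedTheta θ ρ') y ρ ∧
      y ≤ -1 + 13 * θ (4 * r₀) := by
    intro ρ hρmem
    obtain ⟨hρ0, hρr⟩ := hρmem
    set D : ℝ := ((1 / (Real.log 2) ^ 2) * ∫ s in ρ..(2 * ρ), (θ (2 * s) - θ s) / s) / ρ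
      with hDdef
    have hD := smoothedTheta_hasDerivAt hθint hρ0
    have h1 : HasDerivAt (fun ρ' : ℝ => 3 * ρ' * smoothedTheta θ ρ')
        (3 * 1 * smoothedTheta θ ρ + 3 * ρ * D) ρ := by
      exact ((hasDerivAt_id ρ).const_mul 3).mul hD
    have h2 : HasDerivAt (fun ρ' : ℝ => -ρ' + 3 * ρ' * smoothedTheta θ ρ')
        (-1 + (3 * 1 * smoothedTheta θ ρ + 3 * ρ * D)) ρ := by
      exact (hasDerivAt_id ρ).neg.add h1
    refine ⟨_, h2, ?_⟩
    have hb := smoothedTheta_bound hθnn hθmono hθint hρ0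
    rw [← hDdef] at hb
    have hmono13 : θ (4 * ρ) ≤ θ (4 * r₀) :=
      hθmono (Set.mem_Ioi.mpr (by linarith)) (Set.mem_Ioi.mpr (by linarith)) (by linarith)
    linarith
  have hlt : -1 + 13 * θ (4 * r₀) < -(1 / 2) := by linarith
  have hanti : StrictAntiOn (fun ρ => -ρ + 3 * ρ * smoothedTheta θ ρ) (Set.Ioc 0 r₀) := by
    apply strictAntiOn_of_deriv_neg (convex_Ioc 0 r₀)
    · intro x hx
      obtain ⟨y, hy, _⟩ := hf x hx
      exact hy.differentiableAt.continuousAt.continuousWithinAt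
    · intro x hx
      rw [interior_Ioc] at hx
      obtain ⟨y, hy, hyle⟩ := hf x ⟨hx.1, le_of_lt hx.2⟩
      rw [hy.deriv]
      linarith
  exact ⟨hanti, hlt, hf⟩

end
end

section
/- Let d ≥ 2, let θ : (0,∞) → [0,∞) be nondecreasing and locally integrable against ds/s, define θ̂(r) := (1/log²2) ∫_r^{2r} (1/t) ∫_t^{2t} θ(s)/s ds dt, and let r > 0 satisfy θ(4r) < 1/26. Then for all 0 < ρ ≤ ρ′ ≤ r, the open balls satisfy the nesting B_ρ(3ρθ̂(ρ) e_d) ⊆ B_{ρ′}(3ρ′θ̂(ρ′) e_d), where e_d is the last standard basis vector of ℝ^d. -/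
open MeasureTheory Set Filter Metric intervalIntegral

noncomputable section

/-- inner integral -/
def hF (θ : ℝ → ℝ) (a : ℝ) : ℝ := ∫ s in a..(2 * a), θ s / s

/-- outer integral -/
def Gq (θ : ℝ → ℝ) (ρ : ℝ) : ℝ := ∫ t in ρ..(2 * ρ), (1 / t) * ∫ s in t..(2 * t), θ s / s

lemma hF_eq (θ : ℝ → ℝ) {a : ℝ} (ha : 0 < a) :
    hF θ a = ∫ v in (1:ℝ)..2, θ (a * v) / v := by
  have h1 : (∫ v in (1:ℝ)..2, θ (a * v) / (a * v))
      = a⁻¹ • ∫ s in (a * 1)..(a * 2), θ s / s :=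
    intervalIntegral.integral_comp_mul_left (fun s => θ s / s) ha.ne'
  have h2 : (∫ v in (1:ℝ)..2, θ (a * v) / v)
      = ∫ v in (1:ℝ)..2, a * (θ (a * v) / (a * v)) := by
    refine intervalIntegral.integral_congr fun v hv => ?_
    rw [Set.uIcc_of_le (by norm_num)] at hv
    have hv0 : v ≠ 0 := by have := hv.1; intro h; linarith
    field_simp
  rw [hF, h2, intervalIntegral.integral_const_mul, h1, smul_eq_mul, ← mul_assoc,
    mul_inv_cancel₀ ha.ne', one_mul, mul_comm a 2, mul_one]

lemma intble (θ : ℝ → ℝ) (hθmono : MonotoneOn θ (Set.Ioi (0:ℝ))) {a : ℝ} (ha : 0 < a) :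
    IntervalIntegrable (fun v => θ (a * v) / v) volume 1 2 := by
  have hm : MonotoneOn (fun v => θ (a * v)) (Set.uIcc (1:ℝ) 2) := by
    rw [Set.uIcc_of_le (by norm_num)]
    intro x hx y hy hxy
    exact hθmono (Set.mem_Ioi.2 (by nlinarith [hx.1])) (Set.mem_Ioi.2 (by nlinarith [hy.1]))
      (by nlinarith [hx.1])
  have hc : ContinuousOn (fun v : ℝ => 1 / v) (Set.uIcc (1:ℝ) 2) := by
    apply ContinuousOn.div continuousOn_const continuousOn_id
    intro x hx
    rw [Set.uIcc_of_le (by norm_num)] at hx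
    have := hx.1; intro h; simp only [id] at h; linarith
  have := (hm.intervalIntegrable (μ := volume)).mul_continuousOn hc
  simpa [mul_one_div, div_eq_mul_inv] using this

lemma hF_nonneg (θ : ℝ → ℝ) (hθnn : ∀ s : ℝ, 0 < s → 0 ≤ θ s) {a : ℝ} (ha : 0 < a) :
    0 ≤ hF θ a := by
  refine intervalIntegral.integral_nonneg (by linarith) fun s hs => ?_
  exact div_nonneg (hθnn s (lt_of_lt_of_le ha hs.1)) (by linarith [hs.1])

lemma hF_mono (θ : ℝ → ℝ) (hθnn : ∀ s : ℝ, 0 < s → 0 ≤ θ s)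
    (hθmono : MonotoneOn θ (Set.Ioi (0:ℝ))) {a b : ℝ} (ha : 0 < a) (hab : a ≤ b) :
    hF θ a ≤ hF θ b := by
  have hb : 0 < b := lt_of_lt_of_le ha hab
  rw [hF_eq θ ha, hF_eq θ hb]
  refine intervalIntegral.integral_mono_on (by norm_num)
    (intble θ hθmono ha) (intble θ hθmono hb) fun v hv => ?_
  have hv1 : (1:ℝ) ≤ v := hv.1
  have hv0 : 0 < v := by linarith
  refine (div_le_div_iff_of_pos_right hv0).mpr ?_
  exact hθmono (Set.mem_Ioi.2 (by nlinarith)) (Set.mem_Ioi.2 (by nlinarith)) (by nlinarith)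

lemma hF_le (θ : ℝ → ℝ) (hθnn : ∀ s : ℝ, 0 < s → 0 ≤ θ s)
    (hθmono : MonotoneOn θ (Set.Ioi (0:ℝ)))
    (hθint : ∀ a b : ℝ, 0 < a → IntervalIntegrable (fun s => θ s / s) volume a b)
    {b : ℝ} (hb : 0 < b) : hF θ b ≤ θ (2 * b) * Real.log 2 := by
  have hcont : ContinuousOn (fun s : ℝ => θ (2 * b) * (1 / s)) (Set.uIcc b (2 * b)) := by
    apply ContinuousOn.mul continuousOn_const
    apply ContinuousOn.div continuousOn_const continuousOn_id
    intro x hx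
    rw [Set.uIcc_of_le (by linarith)] at hx
    have := hx.1; intro h; simp only [id] at h; linarith
  have h1 : hF θ b ≤ ∫ s in b..(2 * b), θ (2 * b) * (1 / s) := by
    refine intervalIntegral.integral_mono_on (by linarith) (hθint b (2 * b) hb)
      (hcont.intervalIntegrable) fun s hs => ?_
    have hs0 : 0 < s := lt_of_lt_of_le hb hs.1
    rw [div_eq_mul_inv, mul_one_div, div_eq_mul_inv]
    exact mul_le_mul_of_nonneg_right
      (hθmono (Set.mem_Ioi.2 hs0) (Set.mem_Ioi.2 (by linarith)) hs.2) (by positivity)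
  have h2 : (∫ s in b..(2 * b), θ (2 * b) * (1 / s)) = θ (2 * b) * Real.log 2 := by
    rw [intervalIntegral.integral_const_mul, integral_one_div (by
      rw [Set.uIcc_of_le (by linarith)]; intro h; exact absurd h.1 (by linarith))]
    rw [show (2 * b) / b = 2 by field_simp]
  linarith [h1, h2.le, h2.ge]

lemma hF_sub_le (θ : ℝ → ℝ) (hθnn : ∀ s : ℝ, 0 < s → 0 ≤ θ s)
    (hθmono : MonotoneOn θ (Set.Ioi (0:ℝ)))
    (hθint : ∀ a b : ℝ, 0 < a → IntervalIntegrable (fun s => θ s / s) volume a b)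
    {a b : ℝ} (ha : 0 < a) (hab : a ≤ b) :
    hF θ b - hF θ a ≤ θ (2 * b) * Real.log (b / a) := by
  have hb : 0 < b := lt_of_lt_of_le ha hab
  have e1 : hF θ a + (∫ s in (2 * a)..(2 * b), θ s / s) = ∫ s in a..(2 * b), θ s / s :=
    intervalIntegral.integral_add_adjacent_intervals (hθint _ _ ha) (hθint _ _ (by linarith))
  have e2 : (∫ s in a..b, θ s / s) + hF θ b = ∫ s in a..(2 * b), θ s / s :=
    intervalIntegral.integral_add_adjacent_intervals (hθint _ _ ha) (hθint _ _ hb)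
  have h3 : (0:ℝ) ≤ ∫ s in a..b, θ s / s :=
    intervalIntegral.integral_nonneg hab fun s hs =>
      div_nonneg (hθnn s (lt_of_lt_of_le ha hs.1)) (by linarith [hs.1])
  have hcont : ContinuousOn (fun s : ℝ => θ (2 * b) * (1 / s)) (Set.uIcc (2 * a) (2 * b)) := by
    apply ContinuousOn.mul continuousOn_const
    apply ContinuousOn.div continuousOn_const continuousOn_id
    intro x hx
    rw [Set.uIcc_of_le (by linarith)] at hx
    have := hx.1; intro h; simp only [id] at h; linarith
  have h4 : (∫ s in (2 * a)..(2 * b), θ s / s) ≤ θ (2 * b) * Real.log (b / a) := by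
    have h5 : (∫ s in (2 * a)..(2 * b), θ s / s)
        ≤ ∫ s in (2 * a)..(2 * b), θ (2 * b) * (1 / s) := by
      refine intervalIntegral.integral_mono_on (by linarith) (hθint _ _ (by linarith))
        hcont.intervalIntegrable fun s hs => ?_
      have hs0 : 0 < s := lt_of_lt_of_le (by linarith) hs.1
      rw [div_eq_mul_inv, mul_one_div, div_eq_mul_inv]
      exact mul_le_mul_of_nonneg_right
        (hθmono (Set.mem_Ioi.2 hs0) (Set.mem_Ioi.2 (by linarith)) hs.2) (by positivity)
    have h6 : (∫ s in (2 * a)..(2 * b), θ (2 * b) * (1 / s)) = θ (2 * b) * Real.log (b / a) := by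
      rw [intervalIntegral.integral_const_mul, integral_one_div (by
        rw [Set.uIcc_of_le (by linarith)]; intro h; exact absurd h.1 (by linarith))]
      rw [show (2 * b) / (2 * a) = b / a by
        rw [mul_div_mul_left _ _ (by norm_num : (2:ℝ) ≠ 0)]]
    linarith
  linarith

lemma Gq_scaled (θ : ℝ → ℝ) {ρ : ℝ} (hρ : 0 < ρ) :
    ρ * Gq θ ρ = ∫ τ in (1:ℝ)..2, (ρ / τ) * hF θ (ρ * τ) := by
  have h1 : (∫ τ in (1:ℝ)..2, (1 / (ρ * τ)) * hF θ (ρ * τ))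
      = ρ⁻¹ • ∫ t in (ρ * 1)..(ρ * 2), (1 / t) * hF θ t :=
    intervalIntegral.integral_comp_mul_left (fun t => (1 / t) * hF θ t) hρ.ne'
  have h2 : Gq θ ρ = ∫ t in ρ..(2 * ρ), (1 / t) * hF θ t := rfl
  have h3 : (∫ t in (ρ * 1)..(ρ * 2), (1 / t) * hF θ t) = Gq θ ρ := by
    rw [h2, show ρ * 1 = ρ by ring, show ρ * 2 = 2 * ρ by ring]
  have h4 : (∫ τ in (1:ℝ)..2, (ρ / τ) * hF θ (ρ * τ))
      = ∫ τ in (1:ℝ)..2, ρ ^ 2 * ((1 / (ρ * τ)) * hF θ (ρ * τ)) := by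
    refine intervalIntegral.integral_congr fun τ hτ => ?_
    rw [Set.uIcc_of_le (by norm_num)] at hτ
    have hτ0 : τ ≠ 0 := by have := hτ.1; intro h; linarith
    field_simp
  rw [h4, intervalIntegral.integral_const_mul, h1, h3, smul_eq_mul, ← mul_assoc]
  rw [show ρ ^ 2 * ρ⁻¹ = ρ by field_simp]

lemma intble2 (θ : ℝ → ℝ) (hθnn : ∀ s : ℝ, 0 < s → 0 ≤ θ s)
    (hθmono : MonotoneOn θ (Set.Ioi (0:ℝ))) {ρ : ℝ} (hρ : 0 < ρ) :
    IntervalIntegrable (fun τ => (ρ / τ) * hF θ (ρ * τ)) volume 1 2 := by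
  have hm : MonotoneOn (fun τ => hF θ (ρ * τ)) (Set.uIcc (1:ℝ) 2) := by
    rw [Set.uIcc_of_le (by norm_num)]
    intro x hx y hy hxy
    exact hF_mono θ hθnn hθmono (by nlinarith [hx.1]) (by nlinarith [hx.1])
  have hc : ContinuousOn (fun τ : ℝ => ρ / τ) (Set.uIcc (1:ℝ) 2) := by
    apply ContinuousOn.div continuousOn_const continuousOn_id
    intro x hx
    rw [Set.uIcc_of_le (by norm_num)] at hx
    have := hx.1; intro h; simp only [id] at h; linarith
  have := (hm.intervalIntegrable (μ := volume)).mul_continuousOn hc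
  simpa [mul_comm] using this

lemma key (θ : ℝ → ℝ) (hθnn : ∀ s : ℝ, 0 < s → 0 ≤ θ s)
    (hθmono : MonotoneOn θ (Set.Ioi (0:ℝ)))
    (hθint : ∀ a b : ℝ, 0 < a → IntervalIntegrable (fun s => θ s / s) volume a b)
    (r : ℝ) (hr : 0 < r) {ρ ρ' : ℝ} (hρ : 0 < ρ) (h1 : ρ ≤ ρ') (h2 : ρ' ≤ r) :
    0 ≤ ρ' * Gq θ ρ' - ρ * Gq θ ρ ∧
    ρ' * Gq θ ρ' - ρ * Gq θ ρ ≤ (ρ' - ρ) * (θ (4 * r) * (1 + Real.log 2)) := by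
  have hρ' : 0 < ρ' := lt_of_lt_of_le hρ h1
  have hT : 0 ≤ θ (4 * r) := hθnn _ (by linarith)
  have hL : (0:ℝ) < Real.log 2 := Real.log_pos (by norm_num)
  have Iρ := intble2 θ hθnn hθmono hρ
  have Iρ' := intble2 θ hθnn hθmono hρ'
  -- pointwise facts
  have ptfacts : ∀ τ ∈ Set.Icc (1:ℝ) 2,
      (ρ / τ) * hF θ (ρ * τ) ≤ (ρ' / τ) * hF θ (ρ' * τ) ∧
      (ρ' / τ) * hF θ (ρ' * τ) - (ρ / τ) * hF θ (ρ * τ)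
        ≤ (ρ' - ρ) * (θ (4 * r) * (1 + Real.log 2)) := by
    intro τ hτ
    have hτ1 : (1:ℝ) ≤ τ := hτ.1
    have hτ2 : τ ≤ 2 := hτ.2
    have hτ0 : 0 < τ := by linarith
    set a := ρ * τ with ha_def
    set b := ρ' * τ with hb_def
    have ha : 0 < a := by positivity
    have hb : 0 < b := by positivity
    have hab : a ≤ b := by nlinarith
    have h2b : 2 * b ≤ 4 * r := by nlinarith
    have hθ2b : θ (2 * b) ≤ θ (4 * r) :=
      hθmono (Set.mem_Ioi.2 (by linarith)) (Set.mem_Ioi.2 (by linarith)) h2b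
    have hA0 : 0 ≤ hF θ a := hF_nonneg θ hθnn ha
    have hAB : hF θ a ≤ hF θ b := hF_mono θ hθnn hθmono ha hab
    have hBle : hF θ b ≤ θ (4 * r) * Real.log 2 := by
      have := hF_le θ hθnn hθmono hθint hb
      nlinarith
    have hba : b / a = ρ' / ρ := by
      rw [ha_def, hb_def, mul_div_mul_right _ _ hτ0.ne']
    have hsub : hF θ b - hF θ a ≤ θ (4 * r) * Real.log (ρ' / ρ) := by
      have := hF_sub_le θ hθnn hθmono hθint ha hab
      rw [hba] at this
      have hlg : 0 ≤ Real.log (ρ' / ρ) :=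
        Real.log_nonneg (by rw [le_div_iff₀ hρ]; linarith)
      nlinarith
    have hρlg : ρ * Real.log (ρ' / ρ) ≤ ρ' - ρ := by
      have h := Real.log_le_sub_one_of_pos (show (0:ℝ) < ρ' / ρ by positivity)
      have : ρ * (ρ' / ρ - 1) = ρ' - ρ := by field_simp
      nlinarith
    have hlg0 : 0 ≤ Real.log (ρ' / ρ) :=
      Real.log_nonneg (by rw [le_div_iff₀ hρ]; linarith)
    constructor
    · have hfr : ρ / τ ≤ ρ' / τ := (div_le_div_iff_of_pos_right hτ0).mpr h1
      exact mul_le_mul hfr hAB hA0 (by positivity)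
    · have hX0 : 0 ≤ ρ' * hF θ b - ρ * hF θ a := by nlinarith
      have step1 : (ρ' / τ) * hF θ b - (ρ / τ) * hF θ a = (ρ' * hF θ b - ρ * hF θ a) / τ := by
        field_simp
      have step2 : (ρ' * hF θ b - ρ * hF θ a) / τ ≤ ρ' * hF θ b - ρ * hF θ a :=
        div_le_self hX0 hτ1
      have step3 : ρ' * hF θ b - ρ * hF θ a ≤ (ρ' - ρ) * (θ (4 * r) * (1 + Real.log 2)) := by
        nlinarith [mul_le_mul_of_nonneg_left hBle (show (0:ℝ) ≤ ρ' - ρ by linarith),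
          mul_le_mul_of_nonneg_left hsub hρ.le,
          mul_le_mul_of_nonneg_left hρlg hT]
      rw [step1]; linarith
  have hupper : ρ' * Gq θ ρ' - ρ * Gq θ ρ ≤ (ρ' - ρ) * (θ (4 * r) * (1 + Real.log 2)) := by
    rw [Gq_scaled θ hρ, Gq_scaled θ hρ', ← intervalIntegral.integral_sub Iρ' Iρ]
    have := intervalIntegral.integral_mono_on (μ := volume) (by norm_num : (1:ℝ) ≤ 2)
      (Iρ'.sub Iρ) (intervalIntegrable_const
        (c := (ρ' - ρ) * (θ (4 * r) * (1 + Real.log 2))))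
      (fun τ hτ => (ptfacts τ hτ).2)
    have h8 : ((2:ℝ) - 1) • ((ρ' - ρ) * (θ (4 * r) * (1 + Real.log 2)))
        = (ρ' - ρ) * (θ (4 * r) * (1 + Real.log 2)) := by norm_num
    rw [intervalIntegral.integral_const, h8] at this
    exact this
  have hlower : 0 ≤ ρ' * Gq θ ρ' - ρ * Gq θ ρ := by
    rw [Gq_scaled θ hρ, Gq_scaled θ hρ']
    have := intervalIntegral.integral_mono_on (μ := volume) (by norm_num : (1:ℝ) ≤ 2)
      Iρ Iρ' (fun τ hτ => (ptfacts τ hτ).1)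
    linarith
  exact ⟨hlower, hupper⟩

/-- if `θ(4r) < 1/26`, the vertically shifted balls
`B_ρ(3ρθ̂(ρ)e_d)` are nested for `0 < ρ ≤ ρ′ ≤ r`. -/
theorem shifted_balls_nested
    (d : ℕ) (hd : 2 ≤ d)
    (θ : ℝ → ℝ)
    (hθnn : ∀ s : ℝ, 0 < s → 0 ≤ θ s)
    (hθmono : MonotoneOn θ (Set.Ioi (0:ℝ)))
    (hθint : ∀ a b : ℝ, 0 < a → IntervalIntegrable (fun s => θ s / s) volume a b)
    (r : ℝ) (hr : 0 < r) (hsmall : θ (4 * r) < 1 / 26) :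
    ∀ ρ ρ' : ℝ, 0 < ρ → ρ ≤ ρ' → ρ' ≤ r →
      ball ((3 * ρ * smoothedTheta θ ρ) •
          EuclideanSpace.single (⟨d - 1, by omega⟩ : Fin d) (1:ℝ)) ρ ⊆
      ball ((3 * ρ' * smoothedTheta θ ρ') •
          EuclideanSpace.single (⟨d - 1, by omega⟩ : Fin d) (1:ℝ)) ρ' := by
  intro ρ ρ' hρ hρρ' hρ'r
  have hρ' : 0 < ρ' := lt_of_lt_of_le hρ hρρ'
  obtain ⟨hlow, hup⟩ := key θ hθnn hθmono hθint r hr hρ hρρ' hρ'r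
  have hT : 0 ≤ θ (4 * r) := hθnn _ (by linarith)
  have hL1 : (0.6931471803:ℝ) < Real.log 2 := Real.log_two_gt_d9
  have hL2 : Real.log 2 < 0.6931471808 := Real.log_two_lt_d9
  set L := Real.log 2 with hLdef
  have hLpos : (0:ℝ) < L := by rw [hLdef]; exact Real.log_pos (by norm_num)
  have hsm : ∀ x : ℝ, smoothedTheta θ x = (1 / L ^ 2) * Gq θ x := fun _ => rfl
  set e := EuclideanSpace.single (⟨d - 1, by omega⟩ : Fin d) (1:ℝ) with he
  apply ball_subset_ball'
  have hdist : dist ((3 * ρ * smoothedTheta θ ρ) • e) ((3 * ρ' * smoothedTheta θ ρ') • e)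
      = |3 * ρ * smoothedTheta θ ρ - 3 * ρ' * smoothedTheta θ ρ'| := by
    rw [dist_eq_norm, ← sub_smul, norm_smul, he, EuclideanSpace.norm_single]
    simp [Real.norm_eq_abs]
  rw [hdist]
  set D := ρ' * Gq θ ρ' - ρ * Gq θ ρ with hD
  have hdiff : 3 * ρ' * smoothedTheta θ ρ' - 3 * ρ * smoothedTheta θ ρ = (3 / L ^ 2) * D := by
    rw [hsm, hsm, hD]; ring
  have habs : |3 * ρ * smoothedTheta θ ρ - 3 * ρ' * smoothedTheta θ ρ'| = (3 / L ^ 2) * D := by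
    rw [abs_sub_comm, abs_of_nonneg]
    · exact hdiff
    · rw [hdiff]; positivity
  rw [habs]
  -- need ρ + (3/L²)*D ≤ ρ'
  have hDle : D ≤ (ρ' - ρ) * (θ (4 * r) * (1 + L)) := hup
  have hkey : (3 / L ^ 2) * D ≤ ρ' - ρ := by
    have hL2pos : (0:ℝ) < L ^ 2 := by positivity
    rw [div_mul_eq_mul_div, div_le_iff₀ hL2pos]
    have hnum : 3 * D ≤ 3 * ((ρ' - ρ) * (θ (4 * r) * (1 + L))) := by linarith
    nlinarith [mul_le_mul_of_nonneg_left hsmall.le (show (0:ℝ) ≤ 3 * (ρ' - ρ) * (1 + L) by nlinarith)]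
  linarith
end
end
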